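/- The integral of x²·φ(x)·Φ(x)² over the real line equals 1/3 + 1/(2π√3), where φ and Φ are the density and cdf of the standard normal distribution. -/

import Mathlib

open Real MeasureTheory Filter Set

noncomputable def phi (x : ℝ) : ℝ := (1 / Real.sqrt (2 * Real.pi)) * Real.exp (-x ^ 2 / 2)

noncomputable def Phi (x : ℝ) : ℝ := ∫ t in Set.Iic x, phi t

lemma phi_eq (x : ℝ) : phi x = (1 / Real.sqrt (2 * Real.pi)) * Real.exp (-(1/2) * x ^ 2) := by
  unfold phi
  congr 2
  ring

lemma phi_continuous : Continuous phi := by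
  unfold phi
  fun_prop

lemma phi_nonneg (x : ℝ) : 0 ≤ phi x := by
  unfold phi
  positivity

lemma phi_integrable : Integrable phi := by
  have := (integrable_exp_neg_mul_sq (by norm_num : (0:ℝ) < 1/2)).const_mul
    (1 / Real.sqrt (2 * Real.pi))
  refine this.congr ?_
  filter_upwards with x
  rw [phi_eq]

lemma integral_phi : ∫ x, phi x = 1 := by
  have h : ∫ x : ℝ, Real.exp (-(1/2) * x ^ 2) = Real.sqrt (Real.pi / (1/2)) :=
    integral_gaussian (1/2)
  have h2 : (∫ x, phi x) = (1 / Real.sqrt (2 * Real.pi)) * ∫ x : ℝ, Real.exp (-(1/2) * x ^ 2) := by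
    rw [← integral_const_mul]
    congr 1; ext x; rw [phi_eq]
  rw [h2, h]
  have : Real.pi / (1/2) = 2 * Real.pi := by ring
  rw [this]
  rw [one_div, inv_mul_cancel₀]
  positivity

lemma Phi_nonneg (x : ℝ) : 0 ≤ Phi x := by
  apply integral_nonneg
  intro t; exact phi_nonneg t

lemma Phi_le_one (x : ℝ) : Phi x ≤ 1 := by
  rw [← integral_phi]
  exact setIntegral_le_integral phi_integrable (Filter.Eventually.of_forall phi_nonneg)

lemma hasDerivAt_Phi (x : ℝ) : HasDerivAt Phi (phi x) x := by
  have key : ∀ y : ℝ, Phi y = Phi 0 + ∫ t in (0:ℝ)..y, phi t := by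
    intro y
    have := intervalIntegral.integral_Iic_sub_Iic
      (phi_integrable.integrableOn) (phi_integrable.integrableOn) (a := 0) (b := y)
    unfold Phi
    linarith [this]
  have h := (phi_continuous.integral_hasStrictDerivAt 0 x).hasDerivAt
  have : HasDerivAt (fun y => Phi 0 + ∫ t in (0:ℝ)..y, phi t) (phi x) x :=
    (h.const_add (Phi 0))
  exact this.congr_of_eventuallyEq (Filter.Eventually.of_forall key)

lemma Phi_continuous : Continuous Phi :=
  continuous_iff_continuousAt.mpr fun x => (hasDerivAt_Phi x).continuousAt

lemma Phi_tendsto_atTop : Tendsto Phi atTop (nhds 1) := by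
  rw [← integral_phi]
  exact (MeasureTheory.aecover_Iic (tendsto_id (α := ℝ))).integral_tendsto_of_countably_generated
    phi_integrable

lemma Phi_tendsto_atBot : Tendsto Phi atBot (nhds 0) := by
  have h : Tendsto (fun x => ∫ t in Set.Ioi x, phi t) atBot (nhds (∫ x, phi x)) :=
    (MeasureTheory.aecover_Ioi (tendsto_id (α := ℝ))).integral_tendsto_of_countably_generated
      phi_integrable
  have heq : ∀ x : ℝ, Phi x = (∫ t, phi t) - ∫ t in Set.Ioi x, phi t := by
    intro x
    have := intervalIntegral.integral_Iic_add_Ioi (b := x) (f := phi)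
      phi_integrable.integrableOn phi_integrable.integrableOn
    unfold Phi; linarith
  have := (tendsto_const_nhds (x := ∫ t, phi t) (f := atBot (α := ℝ))).sub h
  rw [sub_self] at this
  exact Tendsto.congr (fun x => (heq x).symm) this

lemma phi_sq (x : ℝ) : Real.exp (-x^2) = 2*Real.pi*(phi x)^2 := by
  have h1 : Real.sqrt (2*Real.pi) ^ 2 = 2*Real.pi := Real.sq_sqrt (by positivity)
  have h2 : Real.exp (-x^2/2) ^ 2 = Real.exp (-x^2) := by
    rw [sq, ← Real.exp_add]; ring_nf
  unfold phi
  rw [mul_pow, h2]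
  rw [div_pow, one_pow, h1]
  have hpi : (0:ℝ) < 2*Real.pi := by positivity
  field_simp

lemma phi_sqrt3 (x : ℝ) : phi (Real.sqrt 3 * x) = Real.exp (-x^2) * phi x := by
  have h3 : (Real.sqrt 3 * x)^2 = 3 * x^2 := by
    rw [mul_pow, Real.sq_sqrt (by norm_num : (3:ℝ) ≥ 0)]
  unfold phi
  rw [h3, show (-(3*x^2)/2 : ℝ) = -x^2 + -x^2/2 by ring, Real.exp_add]
  ring

lemma hasDerivAt_phi (x : ℝ) : HasDerivAt phi (-x * phi x) x := by
  have h : HasDerivAt (fun y : ℝ => -y^2/2) (-x) x := by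
    have := ((hasDerivAt_pow 2 x).neg).div_const 2
    refine this.congr_deriv ?_
    ring
  have h2 := (h.exp).const_mul (1 / Real.sqrt (2 * Real.pi))
  refine h2.congr_deriv ?_
  unfold phi
  ring

noncomputable def G (x : ℝ) : ℝ :=
  -(x * phi x * (Phi x)^2) + (Phi x)^3/3 - (1/(2*Real.pi)) * (Real.exp (-x^2) * Phi x)
    + (1/(2*Real.pi*Real.sqrt 3)) * Phi (Real.sqrt 3 * x)

lemma hasDerivAt_G (x : ℝ) : HasDerivAt G (x^2 * phi x * (Phi x)^2) x := by
  have hphi := hasDerivAt_phi x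
  have hPhi := hasDerivAt_Phi x
  have hexp : HasDerivAt (fun y : ℝ => Real.exp (-y^2)) (-(2*x) * Real.exp (-x^2)) x := by
    have h : HasDerivAt (fun y : ℝ => -y^2) (-(2*x)) x := by
      have := (hasDerivAt_pow 2 x).neg
      refine this.congr_deriv ?_
      ring
    convert h.exp using 1
    ring
  have hPhi3 : HasDerivAt (fun y : ℝ => Phi (Real.sqrt 3 * y))
      (Real.sqrt 3 * phi (Real.sqrt 3 * x)) x := by
    have := (hasDerivAt_Phi (Real.sqrt 3 * x)).comp x
      ((hasDerivAt_id x).const_mul (Real.sqrt 3))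
    refine this.congr_deriv ?_
    simp [mul_comm]
  have H := ((((((hasDerivAt_id x).mul hphi).mul (hPhi.pow 2)).neg.add
      ((hPhi.pow 3).div_const 3)).sub ((hexp.mul hPhi).const_mul (1/(2*Real.pi)))).add
      (hPhi3.const_mul (1/(2*Real.pi*Real.sqrt 3))))
  refine H.congr_deriv ?_
  simp only [id, Pi.mul_apply, Pi.pow_apply]
  rw [phi_sqrt3, phi_sq]
  have h3 : Real.sqrt 3 > 0 := by positivity
  have hpi : Real.pi > 0 := Real.pi_pos
  field_simp
  ring

lemma sq_phi_integrable : Integrable (fun x : ℝ => x^2 * phi x) := by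
  have h := (integrable_rpow_mul_exp_neg_mul_sq (by norm_num : (0:ℝ) < 1/2)
    (by norm_num : (-1:ℝ) < 2)).const_mul (1 / Real.sqrt (2 * Real.pi))
  refine h.congr ?_
  filter_upwards with x
  rw [phi_eq]
  rw [show ((2:ℝ) : ℝ) = ((2:ℕ) : ℝ) by norm_num, Real.rpow_natCast]
  ring

lemma integrand_integrable : Integrable (fun x : ℝ => x^2 * phi x * (Phi x)^2) := by
  refine sq_phi_integrable.mono' ?_ ?_
  · exact ((continuous_pow 2).mul phi_continuous |>.mul (Phi_continuous.pow 2)).aestronglyMeasurable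
  · filter_upwards with x
    rw [Real.norm_eq_abs, abs_mul]
    have h1 : 0 ≤ x^2 * phi x := mul_nonneg (sq_nonneg x) (phi_nonneg x)
    rw [abs_of_nonneg h1]
    have h2 : |(Phi x)^2| ≤ 1 := by
      rw [abs_of_nonneg (sq_nonneg _)]
      exact pow_le_one₀ (Phi_nonneg x) (Phi_le_one x)
    calc x^2 * phi x * |(Phi x)^2| ≤ x^2 * phi x * 1 := by
          exact mul_le_mul_of_nonneg_left h2 h1
      _ = x^2 * phi x := by ring

lemma tendsto_x_exp_atTop : Tendsto (fun x : ℝ => x * Real.exp (-x^2/2)) atTop (nhds 0) := by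
  have h := tendsto_pow_mul_exp_neg_atTop_nhds_zero 1
  have h2 : Tendsto (fun x : ℝ => x^2/2) atTop atTop :=
    (tendsto_pow_atTop two_ne_zero).atTop_div_const (by norm_num)
  have h3 := h.comp h2
  simp only [Function.comp, pow_one] at h3
  refine squeeze_zero' ?_ ?_ h3
  · filter_upwards [eventually_ge_atTop (0:ℝ)] with x hx
    positivity
  · filter_upwards [eventually_ge_atTop (2:ℝ)] with x hx
    show x * Real.exp (-x^2/2) ≤ x^2/2 * Real.exp (-(x^2/2))
    rw [show (-(x^2/2) : ℝ) = -x^2/2 by ring]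
    have hx0 : (0:ℝ) ≤ Real.exp (-x^2/2) := (Real.exp_pos _).le
    have : x ≤ x^2/2 := by nlinarith
    exact mul_le_mul_of_nonneg_right this hx0

lemma tendsto_xphi_atTop : Tendsto (fun x : ℝ => x * phi x) atTop (nhds 0) := by
  have := tendsto_x_exp_atTop.const_mul (1 / Real.sqrt (2 * Real.pi))
  rw [mul_zero] at this
  refine this.congr ?_
  intro x; unfold phi; ring

lemma tendsto_xphi_atBot : Tendsto (fun x : ℝ => x * phi x) atBot (nhds 0) := by
  have h := (tendsto_xphi_atTop.comp tendsto_neg_atBot_atTop).neg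
  rw [neg_zero] at h
  refine h.congr ?_
  intro x
  simp only [Function.comp]
  unfold phi
  rw [neg_sq]
  ring

lemma tendsto_exp_neg_sq_atTop : Tendsto (fun x : ℝ => Real.exp (-x^2)) atTop (nhds 0) := by
  have h2 : Tendsto (fun x : ℝ => -x^2) atTop atBot :=
    tendsto_neg_atTop_atBot.comp (tendsto_pow_atTop two_ne_zero)
  exact Real.tendsto_exp_atBot.comp h2

lemma tendsto_exp_neg_sq_atBot : Tendsto (fun x : ℝ => Real.exp (-x^2)) atBot (nhds 0) := by
  have h := tendsto_exp_neg_sq_atTop.comp tendsto_neg_atBot_atTop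
  refine h.congr ?_
  intro x
  simp [Function.comp]

lemma tendsto_G_atTop :
    Tendsto G atTop (nhds (1/3 + 1/(2*Real.pi*Real.sqrt 3))) := by
  have t1 : Tendsto (fun x : ℝ => x * phi x * (Phi x)^2) atTop (nhds 0) := by
    have := tendsto_xphi_atTop.mul (Phi_tendsto_atTop.pow 2)
    simpa using this
  have t2 : Tendsto (fun x : ℝ => (Phi x)^3/3) atTop (nhds (1/3)) := by
    have := (Phi_tendsto_atTop.pow 3).div_const 3
    simpa using this
  have t3 : Tendsto (fun x : ℝ => (1/(2*Real.pi)) * (Real.exp (-x^2) * Phi x)) atTop (nhds 0) := by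
    have := (tendsto_exp_neg_sq_atTop.mul Phi_tendsto_atTop).const_mul (1/(2*Real.pi))
    simpa using this
  have t4 : Tendsto (fun x : ℝ => (1/(2*Real.pi*Real.sqrt 3)) * Phi (Real.sqrt 3 * x)) atTop
      (nhds (1/(2*Real.pi*Real.sqrt 3))) := by
    have hsq : Tendsto (fun x : ℝ => Real.sqrt 3 * x) atTop atTop := by
      apply Tendsto.const_mul_atTop (by positivity : (0:ℝ) < Real.sqrt 3) tendsto_id
    have := (Phi_tendsto_atTop.comp hsq).const_mul (1/(2*Real.pi*Real.sqrt 3))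
    simpa [Function.comp] using this
  have h := ((t1.neg.add t2).sub t3).add t4
  rw [show -(0:ℝ) + 1/3 - 0 + 1/(2*Real.pi*Real.sqrt 3)
    = 1/3 + 1/(2*Real.pi*Real.sqrt 3) by ring] at h
  exact h

lemma tendsto_G_atBot : Tendsto G atBot (nhds 0) := by
  have t1 : Tendsto (fun x : ℝ => x * phi x * (Phi x)^2) atBot (nhds 0) := by
    have := tendsto_xphi_atBot.mul (Phi_tendsto_atBot.pow 2)
    simpa using this
  have t2 : Tendsto (fun x : ℝ => (Phi x)^3/3) atBot (nhds 0) := by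
    have := (Phi_tendsto_atBot.pow 3).div_const 3
    simpa using this
  have t3 : Tendsto (fun x : ℝ => (1/(2*Real.pi)) * (Real.exp (-x^2) * Phi x)) atBot (nhds 0) := by
    have := (tendsto_exp_neg_sq_atBot.mul Phi_tendsto_atBot).const_mul (1/(2*Real.pi))
    simpa using this
  have t4 : Tendsto (fun x : ℝ => (1/(2*Real.pi*Real.sqrt 3)) * Phi (Real.sqrt 3 * x)) atBot
      (nhds 0) := by
    have hsq : Tendsto (fun x : ℝ => Real.sqrt 3 * x) atBot atBot := by
      apply Tendsto.const_mul_atBot (by positivity : (0:ℝ) < Real.sqrt 3) tendsto_id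
    have := (Phi_tendsto_atBot.comp hsq).const_mul (1/(2*Real.pi*Real.sqrt 3))
    simpa [Function.comp] using this
  have h := ((t1.neg.add t2).sub t3).add t4
  rw [show -(0:ℝ) + 0 - 0 + 0 = (0:ℝ) by ring] at h
  exact h

theorem stmt0 :
    ∫ x : ℝ, x ^ 2 * phi x * (Phi x) ^ 2 =
      1 / 3 + 1 / (2 * Real.pi * Real.sqrt 3) := by
  have hderiv : ∀ x : ℝ, HasDerivAt G (x^2 * phi x * (Phi x)^2) x := hasDerivAt_G
  have hint := integrand_integrable
  have h1 : ∫ x in Set.Iic (0:ℝ), x^2 * phi x * (Phi x)^2 = G 0 - 0 :=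
    MeasureTheory.integral_Iic_of_hasDerivAt_of_tendsto' (fun x _ => hderiv x)
      hint.integrableOn tendsto_G_atBot
  have h2 : ∫ x in Set.Ioi (0:ℝ), x^2 * phi x * (Phi x)^2
      = (1/3 + 1/(2*Real.pi*Real.sqrt 3)) - G 0 :=
    MeasureTheory.integral_Ioi_of_hasDerivAt_of_tendsto' (fun x _ => hderiv x)
      hint.integrableOn tendsto_G_atTop
  have h3 := intervalIntegral.integral_Iic_add_Ioi (b := (0:ℝ))
    (f := fun x => x^2 * phi x * (Phi x)^2) hint.integrableOn hint.integrableOn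
  rw [← h3, h1, h2]
  ring
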